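/- Cross modality of the binomial-n family: fix 0<p<1 and k ≥ 1. If n maximizes the likelihood n ↦ f(k;n,p) over nonnegative integers n, then k is a mode of f(·;n,p), i.e. f(k;n,p) ≥ f(j;n,p) for all j. -/

import Mathlib

/-- Binomial probability function f(k;n,p) = C(n,k) p^k (1-p)^(n-k). -/
noncomputable def binPMF (n k : ℕ) (p : ℝ) : ℝ := (n.choose k) * p ^ k * (1 - p) ^ (n - k)

/-- Cross modality of the binomial-n family: if n maximizes the likelihood
n ↦ f(k;n,p), then k is a mode of f(·;n,p). -/
theorem stmt_2 (p : ℝ) (hp : 0 < p) (hp1 : p < 1) (k : ℕ) (hk : 1 ≤ k) (n : ℕ)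
    (hmax : ∀ m : ℕ, binPMF m k p ≤ binPMF n k p) :
    ∀ j : ℕ, binPMF n j p ≤ binPMF n k p := by
  have hq : (0:ℝ) < 1 - p := by linarith
  have hppos : ∀ a b : ℕ, (0:ℝ) < p ^ a * (1-p) ^ b := fun a b =>
    mul_pos (pow_pos hp a) (pow_pos hq b)
  -- k ≤ n
  have hkn : k ≤ n := by
    by_contra h
    push_neg at h
    have h0 : binPMF n k p = 0 := by
      simp [binPMF, Nat.choose_eq_zero_of_lt h]
    have hkk : binPMF k k p = p ^ k := by simp [binPMF]
    have := hmax k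
    rw [hkk, h0] at this
    exact absurd this (not_le.mpr (pow_pos hp k))
  -- Lemma A : k ≤ (n+1) * p
  have hA : (k:ℝ) ≤ (n+1) * p := by
    have h1 := hmax (n+1)
    have e : n + 1 - k = (n - k) + 1 := by omega
    have h2 : ((n+1).choose k : ℝ) * (1-p) * (p ^ k * (1-p)^(n-k))
        ≤ (n.choose k : ℝ) * (p ^ k * (1-p)^(n-k)) := by
      rw [binPMF, binPMF, e, pow_succ] at h1
      nlinarith [h1]
    have h3 : ((n+1).choose k : ℝ) * (1-p) ≤ (n.choose k : ℝ) :=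
      le_of_mul_le_mul_right h2 (hppos k (n-k))
    have hid : (n.choose k : ℝ) * (n + 1) = ((n+1).choose k : ℝ) * ((n:ℝ) + 1 - k) := by
      have := Nat.choose_mul_succ_eq n k
      have hc : ((n.choose k * (n+1) : ℕ) : ℝ) = (((n+1).choose k * (n + 1 - k) : ℕ) : ℝ) := by
        exact_mod_cast congrArg (Nat.cast (R := ℝ)) this
      push_cast [Nat.cast_sub (by omega : k ≤ n + 1)] at hc
      linarith [hc]
    have hC0 : (0:ℝ) < (n.choose k : ℝ) := by
      exact_mod_cast Nat.choose_pos hkn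
    have hnk : (1:ℝ) ≤ (n:ℝ) + 1 - (k:ℝ) := by
      have : (k:ℝ) ≤ (n:ℝ) := by exact_mod_cast hkn
      linarith
    nlinarith [mul_le_mul_of_nonneg_right h3 (by linarith : (0:ℝ) ≤ (n:ℝ) + 1 - k)]
  -- Lemma B : n * p ≤ k
  have hB : (n:ℝ) * p ≤ k := by
    rcases eq_or_lt_of_le hkn with heq | hlt
    · subst heq
      nlinarith [show (1:ℝ) ≤ (k:ℝ) from by exact_mod_cast hk]
    · -- n = (n-1)+1, k ≤ n-1
      obtain ⟨m, rfl⟩ : ∃ m, n = m + 1 := ⟨n - 1, by omega⟩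
      have hkm : k ≤ m := by omega
      have h1 := hmax m
      have e : m + 1 - k = (m - k) + 1 := by omega
      have h2 : (m.choose k : ℝ) * (p ^ k * (1-p)^(m-k))
          ≤ ((m+1).choose k : ℝ) * (1-p) * (p ^ k * (1-p)^(m-k)) := by
        rw [binPMF, binPMF, e, pow_succ] at h1
        nlinarith [h1]
      have h3 : (m.choose k : ℝ) ≤ ((m+1).choose k : ℝ) * (1-p) :=
        le_of_mul_le_mul_right h2 (hppos k (m-k))
      have hid : (m.choose k : ℝ) * (m + 1) = ((m+1).choose k : ℝ) * ((m:ℝ) + 1 - k) := by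
        have := Nat.choose_mul_succ_eq m k
        have hc : ((m.choose k * (m+1) : ℕ) : ℝ) = (((m+1).choose k * (m + 1 - k) : ℕ) : ℝ) := by
          exact_mod_cast congrArg (Nat.cast (R := ℝ)) this
        push_cast [Nat.cast_sub (by omega : k ≤ m + 1)] at hc
        linarith [hc]
      have hC0 : (0:ℝ) < (m.choose k : ℝ) := by
        exact_mod_cast Nat.choose_pos hkm
      have hnk : (1:ℝ) ≤ (m:ℝ) + 1 - (k:ℝ) := by
        have : (k:ℝ) ≤ (m:ℝ) := by exact_mod_cast hkm
        linarith
      push_cast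
      nlinarith [mul_le_mul_of_nonneg_right h3 (by linarith : (0:ℝ) ≤ (m:ℝ) + 1 - k)]
  -- increasing step below k
  have hup : ∀ j, j < k → binPMF n j p ≤ binPMF n (j+1) p := by
    intro j hj
    have hjn : j < n := lt_of_lt_of_le hj hkn
    have e : n - j = (n - (j+1)) + 1 := by omega
    have hid : (n.choose (j+1) : ℝ) * (j+1) = (n.choose j : ℝ) * ((n:ℝ) - j) := by
      have := Nat.choose_succ_right_eq n j
      have hc : ((n.choose (j+1) * (j+1) : ℕ) : ℝ) = ((n.choose j * (n - j) : ℕ) : ℝ) := by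
        exact_mod_cast congrArg (Nat.cast (R := ℝ)) this
      push_cast [Nat.cast_sub (le_of_lt hjn)] at hc
      linarith [hc]
    have hC0 : (0:ℝ) < (n.choose j : ℝ) := by
      exact_mod_cast Nat.choose_pos (le_of_lt hjn)
    have hjk : (j:ℝ) + 1 ≤ (n+1) * p := by
      have : (j:ℝ) + 1 ≤ k := by exact_mod_cast hj
      linarith
    have key : (n.choose j : ℝ) * (1-p) ≤ (n.choose (j+1) : ℝ) * p := by
      have hj1 : (0:ℝ) < (j:ℝ) + 1 := by positivity
      rw [← mul_le_mul_iff_of_pos_right hj1]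
      nlinarith [hid, hjk, hC0]
    rw [binPMF, binPMF, e, pow_succ, pow_succ]
    calc (n.choose j : ℝ) * p ^ j * ((1-p)^(n-(j+1)) * (1-p))
        = ((n.choose j : ℝ) * (1-p)) * (p ^ j * (1-p)^(n-(j+1))) := by ring
      _ ≤ ((n.choose (j+1) : ℝ) * p) * (p ^ j * (1-p)^(n-(j+1))) :=
          mul_le_mul_of_nonneg_right key (le_of_lt (hppos j (n-(j+1))))
      _ = (n.choose (j+1) : ℝ) * (p ^ j * p) * (1-p)^(n-(j+1)) := by ring
  -- decreasing step above k
  have hdown : ∀ j, k ≤ j → binPMF n (j+1) p ≤ binPMF n j p := by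
    intro j hj
    rcases le_or_gt n j with hnj | hjn
    · have h0 : binPMF n (j+1) p = 0 := by
        simp [binPMF, Nat.choose_eq_zero_of_lt (by omega : n < j + 1)]
      rw [h0]
      have : (0:ℝ) ≤ (n.choose j : ℝ) := by positivity
      rw [binPMF]
      positivity
    · have e : n - j = (n - (j+1)) + 1 := by omega
      have hid : (n.choose (j+1) : ℝ) * (j+1) = (n.choose j : ℝ) * ((n:ℝ) - j) := by
        have := Nat.choose_succ_right_eq n j
        have hc : ((n.choose (j+1) * (j+1) : ℕ) : ℝ) = ((n.choose j * (n - j) : ℕ) : ℝ) := by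
          exact_mod_cast congrArg (Nat.cast (R := ℝ)) this
        push_cast [Nat.cast_sub (le_of_lt hjn)] at hc
        linarith [hc]
      have hC0 : (0:ℝ) < (n.choose j : ℝ) := by
        exact_mod_cast Nat.choose_pos (le_of_lt hjn)
      have hjk : ((n:ℝ)+1) * p ≤ (j:ℝ) + 1 := by
        have hkj : (k:ℝ) ≤ j := by exact_mod_cast hj
        nlinarith
      have key : (n.choose (j+1) : ℝ) * p ≤ (n.choose j : ℝ) * (1-p) := by
        have hj1 : (0:ℝ) < (j:ℝ) + 1 := by positivity
        rw [← mul_le_mul_iff_of_pos_right hj1]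
        nlinarith [hid, hjk, hC0]
      rw [binPMF, binPMF, e, pow_succ, pow_succ]
      calc (n.choose (j+1) : ℝ) * (p ^ j * p) * (1-p)^(n-(j+1))
          = ((n.choose (j+1) : ℝ) * p) * (p ^ j * (1-p)^(n-(j+1))) := by ring
        _ ≤ ((n.choose j : ℝ) * (1-p)) * (p ^ j * (1-p)^(n-(j+1))) :=
            mul_le_mul_of_nonneg_right key (le_of_lt (hppos j (n-(j+1))))
        _ = (n.choose j : ℝ) * p ^ j * ((1-p)^(n-(j+1)) * (1-p)) := by ring
  -- combine
  have hbelow : ∀ d, binPMF n (k - d) p ≤ binPMF n k p := by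
    intro d
    induction d with
    | zero => simp
    | succ d ih =>
      rcases le_or_gt k d with hkd | hdk
      · have : k - (d+1) = k - d := by omega
        rw [this]; exact ih
      · have h1 : k - (d+1) < k := by omega
        have h2 : (k - (d+1)) + 1 = k - d := by omega
        calc binPMF n (k - (d+1)) p ≤ binPMF n ((k - (d+1)) + 1) p := hup _ h1
          _ = binPMF n (k - d) p := by rw [h2]
          _ ≤ binPMF n k p := ih
  have habove : ∀ d, binPMF n (k + d) p ≤ binPMF n k p := by
    intro d
    induction d with
    | zero => simp
    | succ d ih =>
      have : k + (d+1) = (k + d) + 1 := by omega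
      rw [this]
      exact le_trans (hdown _ (by omega)) ih
  intro j
  rcases le_or_gt j k with hjk | hkj
  · have : j = k - (k - j) := by omega
    rw [this]; exact hbelow _
  · have : j = k + (j - k) := by omega
    rw [this]; exact habove _
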